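/- Let R be an ADE root lattice, considered inside R ⊗ E₈ via M_α = ℤα ⊗ E₈ for roots α. For each root α, the SSD involution t_{M_α} acts on R ⊗ E₈ as r_α ⊗ 1, where r_α is the reflection in α on R; consequently the group generated by {t_{M_α} : α ∈ Φ⁺(R)} inside O(R ⊗ E₈) is isomorphic to the Weyl group of R. -/

import Mathlib

open TensorProduct

/-- The Cartan matrix of `E₈` (Bourbaki numbering). -/
def cartanE8 : Matrix (Fin 8) (Fin 8) ℤ :=
  !![2, 0, -1, 0, 0, 0, 0, 0;
     0, 2, 0, -1, 0, 0, 0, 0;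
     -1, 0, 2, -1, 0, 0, 0, 0;
     0, -1, -1, 2, -1, 0, 0, 0;
     0, 0, 0, -1, 2, -1, 0, 0;
     0, 0, 0, 0, -1, 2, -1, 0;
     0, 0, 0, 0, 0, -1, 2, -1;
     0, 0, 0, 0, 0, 0, -1, 2]

/-- The `E₈` bilinear form on `ℤ⁸`. -/
noncomputable def bE8 : LinearMap.BilinForm ℤ (Fin 8 → ℤ) :=
  Matrix.toLinearMap₂' ℤ cartanE8

/-- **SSD involutions of `R ⊗ E₈` and the Weyl group.**
Let `R` be an ADE root lattice (a free integral lattice) with positive roots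
`α i`, reflections `s i = r_{α i}`, and for each `i` let `T i` be the involution of
`R ⊗ E₈` which is `-1` on `M_{α i} = ℤα i ⊗ E₈` and `+1` on its orthogonal
complement (the SSD involution `t_{M_{α i}}`). Then `T i = r_{α i} ⊗ 1`, and the
group generated by the `T i` is isomorphic to the Weyl group of `R` (the group
generated by the reflections `r_{α i}`). -/
theorem ssd_involutions_generate_weyl_group
    {R : Type*} [AddCommGroup R] [Module ℤ R] [Module.Free ℤ R] [Module.Finite ℤ R]
    (bR : LinearMap.BilinForm ℤ R) (hsym : ∀ x y, bR x y = bR y x)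
    {ι : Type*} (α : ι → R) (hα : ∀ i, bR (α i) (α i) = 2)
    (s : ι → (R ≃ₗ[ℤ] R)) (hs : ∀ i x, s i x = x - bR (α i) x • α i)
    (T : ι → ((R ⊗[ℤ] (Fin 8 → ℤ)) ≃ₗ[ℤ] (R ⊗[ℤ] (Fin 8 → ℤ))))
    (hT1 : ∀ i, ∀ x ∈ Submodule.span ℤ (Set.range fun γ : Fin 8 → ℤ => α i ⊗ₜ[ℤ] γ),
      T i x = -x)
    (hT2 : ∀ i x,
      (∀ m ∈ Submodule.span ℤ (Set.range fun γ : Fin 8 → ℤ => α i ⊗ₜ[ℤ] γ),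
        (@LinearMap.BilinForm.tmul _ _ _ _ _ _ _ _ _ _ _ (@smulCommClass_self ℤ R _ Module.toDistribMulAction.toMulAction)
          (@IsScalarTower.left ℤ R _ Module.toDistribMulAction.toMulAction) _
          bR bE8) x m = 0) → T i x = x) :
    (∀ i x, T i x = TensorProduct.congr (s i) (LinearEquiv.refl ℤ (Fin 8 → ℤ)) x) ∧
    Nonempty ((Subgroup.closure (Set.range T)) ≃* (Subgroup.closure (Set.range s))) := by
  classical
  letI := @smulCommClass_self ℤ R _ Module.toDistribMulAction.toMulAction
  letI := @IsScalarTower.left ℤ R _ Module.toDistribMulAction.toMulAction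
  -- cancellation of doubling in `R ⊗ E₈`
  have hcancelR : ∀ v w : R, v + v = w + w → v = w := by
    intro v w h
    have b := Module.Free.chooseBasis ℤ R
    apply b.repr.injective
    ext j
    have h2 := congrArg (fun t => b.repr t j) h
    simp only [map_add, Finsupp.add_apply] at h2
    omega
  have hcancel : ∀ x y : R ⊗[ℤ] (Fin 8 → ℤ), x + x = y + y → x = y := by
    intro x y h
    apply (TensorProduct.piScalarRight ℤ ℤ R (Fin 8)).injective
    funext k
    have h2 := congrArg (TensorProduct.piScalarRight ℤ ℤ R (Fin 8)) h
    rw [map_add, map_add] at h2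
    exact hcancelR _ _ (congrFun h2 k)
  -- the auxiliary linear map `q i : R ⊗ E₈ → E₈`, `β ⊗ γ ↦ bR (α i) β • γ`
  let q : ι → (R ⊗[ℤ] (Fin 8 → ℤ)) →ₗ[ℤ] (Fin 8 → ℤ) := fun i =>
    TensorProduct.lift ((LinearMap.lsmul ℤ (Fin 8 → ℤ)).comp (bR (α i)))
  have hq : ∀ i β γ, q i (β ⊗ₜ[ℤ] γ) = bR (α i) β • γ := by
    intro i β γ
    simp [q]
  -- `r_α ⊗ 1` in terms of `q`
  have hL : ∀ i z, TensorProduct.congr (s i) (LinearEquiv.refl ℤ (Fin 8 → ℤ)) z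
      = z - (α i) ⊗ₜ[ℤ] (q i z) := by
    intro i z
    induction z using TensorProduct.induction_on with
    | zero => simp
    | tmul β γ =>
      rw [TensorProduct.congr_tmul, hq, hs]
      rw [← Int.cast_smul_eq_zsmul ℤ (bR (α i) β) (α i)]
      simp only [Int.cast_id, LinearEquiv.refl_apply]
      rw [TensorProduct.sub_tmul, TensorProduct.smul_tmul]
    | add u v hu hv =>
      rw [map_add, hu, hv, map_add, TensorProduct.tmul_add]
      abel
  -- membership of `α i ⊗ q i z` in the span
  have hv : ∀ i (z : R ⊗[ℤ] (Fin 8 → ℤ)),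
      (α i) ⊗ₜ[ℤ] (q i z) ∈ Submodule.span ℤ (Set.range fun γ : Fin 8 → ℤ => α i ⊗ₜ[ℤ] γ) :=
    fun i z => Submodule.subset_span ⟨q i z, rfl⟩
  -- key orthogonality computation
  have hkey : ∀ i (γ : Fin 8 → ℤ) (z : R ⊗[ℤ] (Fin 8 → ℤ)),
      (LinearMap.BilinForm.tmul bR bE8) z ((α i) ⊗ₜ[ℤ] γ)
        + (LinearMap.BilinForm.tmul bR bE8) z ((α i) ⊗ₜ[ℤ] γ)
      = (LinearMap.BilinForm.tmul bR bE8) ((α i) ⊗ₜ[ℤ] (q i z)) ((α i) ⊗ₜ[ℤ] γ) := by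
    intro i γ z
    induction z using TensorProduct.induction_on with
    | zero => simp
    | tmul β δ =>
      rw [hq]
      simp only [LinearMap.BilinForm.tmul, LinearMap.BilinForm.tensorDistrib_tmul]
      rw [LinearMap.map_smul, LinearMap.smul_apply, smul_eq_mul, hsym β (α i), hα i]
      simp only [smul_eq_mul]
      ring
    | add u v hu hv =>
      have e1 : (LinearMap.BilinForm.tmul bR bE8) (u + v) ((α i) ⊗ₜ[ℤ] γ)
          = (LinearMap.BilinForm.tmul bR bE8) u ((α i) ⊗ₜ[ℤ] γ)
            + (LinearMap.BilinForm.tmul bR bE8) v ((α i) ⊗ₜ[ℤ] γ) := by rw [map_add]; rfl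
      have e2 : q i (u + v) = q i u + q i v := map_add (q i) u v
      have e3 : (LinearMap.BilinForm.tmul bR bE8) ((α i) ⊗ₜ[ℤ] (q i u + q i v)) ((α i) ⊗ₜ[ℤ] γ)
          = (LinearMap.BilinForm.tmul bR bE8) ((α i) ⊗ₜ[ℤ] (q i u)) ((α i) ⊗ₜ[ℤ] γ)
            + (LinearMap.BilinForm.tmul bR bE8) ((α i) ⊗ₜ[ℤ] (q i v)) ((α i) ⊗ₜ[ℤ] γ) := by
        rw [TensorProduct.tmul_add, map_add]; rfl
      rw [e1, e2, e3, ← hu, ← hv]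
      ring
  have horth : ∀ i (x : R ⊗[ℤ] (Fin 8 → ℤ)),
      ∀ m ∈ Submodule.span ℤ (Set.range fun γ : Fin 8 → ℤ => α i ⊗ₜ[ℤ] γ),
        (LinearMap.BilinForm.tmul bR bE8) (x + x - (α i) ⊗ₜ[ℤ] (q i x)) m = 0 := by
    intro i x m hm
    rw [← Submodule.mem_toAddSubgroup, Submodule.span_int_eq_addSubgroupClosure] at hm
    induction hm using AddSubgroup.closure_induction with
    | mem m hmem =>
      obtain ⟨γ, rfl⟩ := hmem
      have e1 : (LinearMap.BilinForm.tmul bR bE8) (x + x - (α i) ⊗ₜ[ℤ] (q i x)) ((α i) ⊗ₜ[ℤ] γ)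
          = ((LinearMap.BilinForm.tmul bR bE8) x ((α i) ⊗ₜ[ℤ] γ)
              + (LinearMap.BilinForm.tmul bR bE8) x ((α i) ⊗ₜ[ℤ] γ))
            - (LinearMap.BilinForm.tmul bR bE8) ((α i) ⊗ₜ[ℤ] (q i x)) ((α i) ⊗ₜ[ℤ] γ) := by
        rw [map_sub, map_add]; rfl
      rw [e1, hkey i γ x, sub_self]
    | zero => rw [map_zero]
    | add u v hu hv h1 h2 => rw [map_add, h1, h2, add_zero]
    | neg u hu h1 => rw [map_neg, h1, neg_zero]
  -- Part 1
  have hpart1 : ∀ i x, T i x = TensorProduct.congr (s i) (LinearEquiv.refl ℤ (Fin 8 → ℤ)) x := by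
    intro i x
    apply hcancel
    have h1 : T i ((α i) ⊗ₜ[ℤ] (q i x)) = -((α i) ⊗ₜ[ℤ] (q i x)) := hT1 i _ (hv i x)
    have h2 : T i (x + x - (α i) ⊗ₜ[ℤ] (q i x)) = x + x - (α i) ⊗ₜ[ℤ] (q i x) :=
      hT2 i _ (horth i x)
    have e0 : x + x = (x + x - (α i) ⊗ₜ[ℤ] (q i x)) + (α i) ⊗ₜ[ℤ] (q i x) := by abel
    have h3 : T i x + T i x = (x + x - (α i) ⊗ₜ[ℤ] (q i x)) + -((α i) ⊗ₜ[ℤ] (q i x)) := by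
      rw [← map_add (T i) x x, e0, map_add (T i), h1, h2]
      abel
    rw [h3, hL i x]
    abel
  refine ⟨hpart1, ?_⟩
  -- Part 2
  have hginv : ∀ (g : R ≃ₗ[ℤ] R) z,
      TensorProduct.congr g.symm (LinearEquiv.refl ℤ (Fin 8 → ℤ))
        (TensorProduct.congr g (LinearEquiv.refl ℤ (Fin 8 → ℤ)) z) = z := by
    intro g z
    induction z using TensorProduct.induction_on with
    | zero => rw [map_zero, map_zero]
    | tmul β γ =>
      rw [TensorProduct.congr_tmul, TensorProduct.congr_tmul, g.symm_apply_apply]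
      rfl
    | add u v hu hv => rw [map_add, map_add, hu, hv]
  let Φfun : (R ≃ₗ[ℤ] R) → ((R ⊗[ℤ] (Fin 8 → ℤ)) ≃ₗ[ℤ] (R ⊗[ℤ] (Fin 8 → ℤ))) := fun g =>
    AddEquiv.toIntLinearEquiv
      { toFun := fun z => TensorProduct.congr g (LinearEquiv.refl ℤ (Fin 8 → ℤ)) z
        invFun := fun z => TensorProduct.congr g.symm (LinearEquiv.refl ℤ (Fin 8 → ℤ)) z
        left_inv := fun z => hginv g z
        right_inv := fun z => by
          have := hginv g.symm z
          rwa [g.symm_symm] at this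
        map_add' := fun u v =>
          map_add (TensorProduct.congr g (LinearEquiv.refl ℤ (Fin 8 → ℤ))) u v }
  have hΦfun : ∀ (g : R ≃ₗ[ℤ] R) x,
      Φfun g x = TensorProduct.congr g (LinearEquiv.refl ℤ (Fin 8 → ℤ)) x := fun g x => rfl
  have htm : ∀ (g : R ≃ₗ[ℤ] R) (β : R) (γ : Fin 8 → ℤ),
      Φfun g (β ⊗ₜ[ℤ] γ) = (g β) ⊗ₜ[ℤ] γ := by
    intro g β γ
    rw [hΦfun, TensorProduct.congr_tmul]
    rfl
  have hone : ∀ z, Φfun 1 z = z := by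
    intro z
    induction z using TensorProduct.induction_on with
    | zero => rw [map_zero]
    | tmul β γ => rw [htm 1 β γ]; rfl
    | add u v hu hv => rw [map_add, hu, hv]
  have hmul : ∀ (f g : R ≃ₗ[ℤ] R) z, Φfun (f * g) z = Φfun f (Φfun g z) := by
    intro f g z
    induction z using TensorProduct.induction_on with
    | zero => rw [map_zero, map_zero, map_zero]
    | tmul β γ => rw [htm (f * g) β γ, htm g β γ, htm f (g β) γ]; rfl
    | add u v hu hv => rw [map_add, map_add (Φfun g), map_add (Φfun f), hu, hv]
  let Φ : (R ≃ₗ[ℤ] R) →* ((R ⊗[ℤ] (Fin 8 → ℤ)) ≃ₗ[ℤ] (R ⊗[ℤ] (Fin 8 → ℤ))) :=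
    { toFun := Φfun
      map_one' := LinearEquiv.ext fun z => hone z
      map_mul' := fun f g => LinearEquiv.ext fun z => hmul f g z }
  have hinj : Function.Injective Φ := by
    intro g g' h
    apply LinearEquiv.toLinearMap_injective
    apply LinearMap.ext
    intro β
    have h1 : (g β) ⊗ₜ[ℤ] (Pi.single (0 : Fin 8) (1:ℤ) : Fin 8 → ℤ) = (g' β) ⊗ₜ[ℤ] (Pi.single (0 : Fin 8) (1:ℤ) : Fin 8 → ℤ) := by
      rw [← htm g β, ← htm g' β]
      exact congrArg (fun e' => e' (β ⊗ₜ[ℤ] (Pi.single (0 : Fin 8) (1:ℤ) : Fin 8 → ℤ))) h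
    have h2 := congrArg (TensorProduct.piScalarRightHom ℤ ℤ R (Fin 8)) h1
    rw [TensorProduct.piScalarRightHom_tmul, TensorProduct.piScalarRightHom_tmul] at h2
    have h3 := congrFun h2 0
    simpa using h3
  have hTΦ : ∀ i, T i = Φ (s i) := fun i =>
    LinearEquiv.ext fun x => (hpart1 i x).trans (hΦfun (s i) x).symm
  have hrange : Set.range T = ⇑Φ '' Set.range s := by
    ext e
    constructor
    · rintro ⟨i, rfl⟩
      exact ⟨s i, ⟨i, rfl⟩, (hTΦ i).symm⟩
    · rintro ⟨g, ⟨i, rfl⟩, rfl⟩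
      exact ⟨i, hTΦ i⟩
  have hcl : Subgroup.closure (Set.range T) = Subgroup.map Φ (Subgroup.closure (Set.range s)) := by
    rw [MonoidHom.map_closure, hrange]
  exact ⟨(MulEquiv.subgroupCongr hcl).trans
    (Subgroup.equivMapOfInjective _ Φ hinj).symm⟩
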